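/- Let f be μ-strongly convex (μ ≥ 0) and L_f-smooth with ∇f(x*) = 0. Let x̃ = x − e, and let G be a random vector with E[G] = ∇f(x) and E‖G‖² ≤ (2L_f + 4L/n)(f(x) − f(x*)) + (4L/n)(f(w) − f(x*)) for some w ∈ ℝ^d and constants L, n > 0. If x̃⁺ = x̃ − ηG with η ≤ 1/(4L_f + 8L/n), then E‖x̃⁺ − x*‖² ≤ (1 − μη/2)‖x̃ − x*‖² − (η/2)(f(x) − f(x*)) + 3L_f η‖e‖² + (4L/n)η²(f(w) − f(x*)). -/

import Mathlib

set_option maxHeartbeats 1000000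

open MeasureTheory
open scoped InnerProductSpace

lemma descent_lemma {d : ℕ} (f : EuclideanSpace ℝ (Fin d) → ℝ)
    (gf : EuclideanSpace ℝ (Fin d) → EuclideanSpace ℝ (Fin d))
    {Lf : ℝ} (hLf : 0 < Lf)
    (hgrad : ∀ y, HasGradientAt f (gf y) y)
    (hlip : LipschitzWith (Real.toNNReal Lf) gf)
    (x y : EuclideanSpace ℝ (Fin d)) :
    f y ≤ f x + ⟪gf x, y - x⟫_ℝ + Lf / 2 * ‖y - x‖ ^ 2 := by
  set v := y - x with hv
  have hγ : ∀ t : ℝ, HasDerivAt (fun t : ℝ => x + t • v) v t := by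
    intro t
    simpa using ((hasDerivAt_id t).smul_const v).const_add x
  have hφ : ∀ t : ℝ, HasDerivAt (fun t : ℝ => f (x + t • v)) ⟪gf (x + t • v), v⟫_ℝ t := by
    intro t
    have h1 : HasFDerivAt f (InnerProductSpace.toDual ℝ _ (gf (x + t • v))) (x + t • v) :=
      hgrad _
    convert h1.comp_hasDerivAt t (hγ t) using 1
    · rfl
    · rfl
    · rfl
    · simp
  have hcont : Continuous fun t : ℝ => ⟪gf (x + t • v), v⟫_ℝ :=
    (hlip.continuous.comp (continuous_const.add (continuous_id.smul continuous_const))).inner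
      continuous_const
  have key : f y - f x = ∫ t in (0:ℝ)..1, ⟪gf (x + t • v), v⟫_ℝ := by
    have h := intervalIntegral.integral_eq_sub_of_hasDerivAt (f := fun t : ℝ => f (x + t • v))
      (fun t _ => hφ t) (hcont.intervalIntegrable 0 1)
    rw [h]
    simp [hv]
  have hbound : (∫ t in (0:ℝ)..1, ⟪gf (x + t • v), v⟫_ℝ) ≤
      ∫ t in (0:ℝ)..1, (⟪gf x, v⟫_ℝ + t * (Lf * ‖v‖ ^ 2)) := by
    apply intervalIntegral.integral_mono_on zero_le_one (hcont.intervalIntegrable 0 1)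
      ((continuous_const.add (continuous_id.mul continuous_const)).intervalIntegrable 0 1)
    intro t ht
    have h1 : ⟪gf (x + t • v) - gf x, v⟫_ℝ ≤ ‖gf (x + t • v) - gf x‖ * ‖v‖ :=
      real_inner_le_norm _ _
    have h2 : ‖gf (x + t • v) - gf x‖ ≤ Lf * (t * ‖v‖) := by
      have h3 := hlip.dist_le_mul (x + t • v) x
      rw [Real.coe_toNNReal _ hLf.le] at h3
      have h4 : dist (x + t • v) x = t * ‖v‖ := by
        rw [dist_eq_norm]
        simp [norm_smul, abs_of_nonneg ht.1]
      rw [h4] at h3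
      simpa [dist_eq_norm] using h3
    have h5 : ⟪gf (x + t • v), v⟫_ℝ = ⟪gf x, v⟫_ℝ + ⟪gf (x + t • v) - gf x, v⟫_ℝ := by
      rw [inner_sub_left]; ring
    simp only [Pi.add_apply, Pi.mul_apply, id_eq]
    nlinarith [mul_le_mul_of_nonneg_right h2 (norm_nonneg v), norm_nonneg v]
  have hval : (∫ t in (0:ℝ)..1, (⟪gf x, v⟫_ℝ + t * (Lf * ‖v‖ ^ 2)))
      = ⟪gf x, v⟫_ℝ + Lf / 2 * ‖v‖ ^ 2 := by
    rw [intervalIntegral.integral_add (intervalIntegrable_const)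
      ((intervalIntegral.intervalIntegrable_id).mul_const _),
      intervalIntegral.integral_mul_const, integral_id]
    norm_num; ring
  linarith [key ▸ hbound.trans_eq hval]

theorem smooth_step_progress {d : ℕ} {Ω : Type*} [MeasurableSpace Ω]
    (μmeas : Measure Ω) [IsProbabilityMeasure μmeas]
    (f : EuclideanSpace ℝ (Fin d) → ℝ)
    (gf : EuclideanSpace ℝ (Fin d) → EuclideanSpace ℝ (Fin d))
    (μ Lf L n : ℝ) (hμ : 0 ≤ μ) (hLf : 0 < Lf) (hL : 0 < L) (hn : 0 < n)
    -- `μ`-strong convexity of `f` (via the gradient inequality)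
    (hsc : ∀ x y, f x + ⟪gf x, y - x⟫_ℝ + (μ / 2) * ‖y - x‖ ^ 2 ≤ f y)
    (hgrad : ∀ y, HasGradientAt f (gf y) y)
    (hlip : LipschitzWith (Real.toNNReal Lf) gf)
    (xstar : EuclideanSpace ℝ (Fin d)) (hstar : gf xstar = 0)
    (x e w : EuclideanSpace ℝ (Fin d))
    (G : Ω → EuclideanSpace ℝ (Fin d))
    (η : ℝ) (hη0 : 0 < η) (hη : η ≤ 1 / (4 * Lf + 8 * L / n))
    (hGint : Integrable G μmeas)
    (hGsq : Integrable (fun ω => ‖G ω‖ ^ 2) μmeas)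
    (hint : Integrable (fun ω => ‖(x - e) - η • G ω - xstar‖ ^ 2) μmeas)
    (hmean : (∫ ω, G ω ∂μmeas) = gf x)
    (hsec : (∫ ω, ‖G ω‖ ^ 2 ∂μmeas) ≤
      (2 * Lf + 4 * L / n) * (f x - f xstar) + (4 * L / n) * (f w - f xstar)) :
    (∫ ω, ‖(x - e) - η • G ω - xstar‖ ^ 2 ∂μmeas) ≤
      (1 - μ * η / 2) * ‖(x - e) - xstar‖ ^ 2 - (η / 2) * (f x - f xstar) +
        3 * Lf * η * ‖e‖ ^ 2 + (4 * L / n) * η ^ 2 * (f w - f xstar) := by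
  set a := (x - e) - xstar with ha
  -- expand the squared norm pointwise
  have hexp : ∀ ω, ‖(x - e) - η • G ω - xstar‖ ^ 2
      = ‖a‖ ^ 2 - 2 * η * ⟪a, G ω⟫_ℝ + η ^ 2 * ‖G ω‖ ^ 2 := by
    intro ω
    have h0 : (x - e) - η • G ω - xstar = a - η • G ω := by rw [ha]; abel
    rw [h0, norm_sub_sq_real, real_inner_smul_right, norm_smul]
    rw [Real.norm_eq_abs, mul_pow, sq_abs]
    ring
  have hinner : Integrable (fun ω => ⟪a, G ω⟫_ℝ) μmeas := by
    have h := (innerSL ℝ a).integrable_comp hGint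
    simpa using h
  have hI : (∫ ω, ‖(x - e) - η • G ω - xstar‖ ^ 2 ∂μmeas)
      = ‖a‖ ^ 2 - 2 * η * ⟪a, gf x⟫_ℝ + η ^ 2 * (∫ ω, ‖G ω‖ ^ 2 ∂μmeas) := by
    rw [← hmean, ← integral_inner hGint]
    rw [show (∫ ω, ‖(x - e) - η • G ω - xstar‖ ^ 2 ∂μmeas)
        = ∫ ω, (‖a‖ ^ 2 - 2 * η * ⟪a, G ω⟫_ℝ + η ^ 2 * ‖G ω‖ ^ 2) ∂μmeas from
      integral_congr_ae (Filter.Eventually.of_forall hexp)]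
    have i1 : Integrable (fun ω => ‖a‖ ^ 2 - 2 * η * ⟪a, G ω⟫_ℝ) μmeas :=
      (integrable_const _).sub (hinner.const_mul _)
    have i2 : Integrable (fun ω => η ^ 2 * ‖G ω‖ ^ 2) μmeas := hGsq.const_mul _
    rw [integral_add i1 i2, integral_sub (integrable_const _) (hinner.const_mul _),
        integral_const, integral_const_mul, integral_const_mul]
    simp
  -- scalar facts
  have hfy : ∀ y, f xstar ≤ f y := by
    intro y
    have h := hsc xstar y
    rw [hstar] at h
    simp only [inner_zero_left] at h
    nlinarith [mul_nonneg hμ (sq_nonneg ‖y - xstar‖)]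
  have hD : 0 ≤ f x - f xstar := by linarith [hfy x]
  have hW : 0 ≤ f w - f xstar := by linarith [hfy w]
  have hgn : ‖gf x‖ ^ 2 ≤ 2 * Lf * (f x - f xstar) := by
    have hd := descent_lemma f gf hLf hgrad hlip x (x - (1 / Lf) • gf x)
    have h1 : (x - (1 / Lf) • gf x) - x = -((1 / Lf) • gf x) := by abel
    rw [h1, inner_neg_right, real_inner_smul_right, real_inner_self_eq_norm_sq,
      norm_neg, norm_smul] at hd
    have hLf' : Lf * (1 / Lf) = 1 := mul_one_div_cancel hLf.ne'
    have h2 : |(1 : ℝ) / Lf| = 1 / Lf := abs_of_pos (by positivity)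
    rw [Real.norm_eq_abs, h2, mul_pow] at hd
    have h3 : Lf / 2 * ((1 / Lf) ^ 2 * ‖gf x‖ ^ 2) = 1 / (2 * Lf) * ‖gf x‖ ^ 2 := by
      field_simp
    have h3b : 1 / Lf * ‖gf x‖ ^ 2 = 2 * (1 / (2 * Lf) * ‖gf x‖ ^ 2) := by
      field_simp
    have hd2 : f xstar ≤ f x - 1 / (2 * Lf) * ‖gf x‖ ^ 2 := by
      linarith [hfy (x - (1 / Lf) • gf x), hd, h3, h3b]
    have h4 : 1 / (2 * Lf) * ‖gf x‖ ^ 2 ≤ f x - f xstar := by linarith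
    have h5 := mul_le_mul_of_nonneg_left h4 (show (0:ℝ) ≤ 2 * Lf by positivity)
    have h6 : 2 * Lf * (1 / (2 * Lf) * ‖gf x‖ ^ 2) = ‖gf x‖ ^ 2 := by
      field_simp
    linarith [h5, h6]
  have hE2 : 2 * ⟪e, gf x⟫_ℝ ≤ 2 * Lf * ‖e‖ ^ 2 + (f x - f xstar) := by
    have h1 : ⟪e, gf x⟫_ℝ ≤ ‖e‖ * ‖gf x‖ := real_inner_le_norm _ _
    have hkey : (2 * Lf) * (2 * ⟪e, gf x⟫_ℝ)
        ≤ (2 * Lf) * (2 * Lf * ‖e‖ ^ 2 + (f x - f xstar)) := by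
      nlinarith [mul_le_mul_of_nonneg_left h1 (show (0:ℝ) ≤ 4 * Lf by positivity),
        sq_nonneg (2 * Lf * ‖e‖ - ‖gf x‖), hgn, hLf]
    exact le_of_mul_le_mul_left hkey (by positivity)
  have hMu : μ * ‖e‖ ^ 2 ≤ Lf * ‖e‖ ^ 2 := by
    have h1 := hsc xstar (xstar + e)
    have h2 := hsc (xstar + e) xstar
    rw [hstar] at h1
    simp only [inner_zero_left, add_sub_cancel_left] at h1
    rw [show xstar - (xstar + e) = -e by abel, inner_neg_right, norm_neg] at h2
    have h5 := hlip.dist_le_mul (xstar + e) xstar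
    rw [Real.coe_toNNReal _ hLf.le] at h5
    rw [show dist (xstar + e) xstar = ‖e‖ by simp [dist_eq_norm], hstar,
      dist_zero_right] at h5
    have h7 : ⟪gf (xstar + e), e⟫_ℝ ≤ ‖gf (xstar + e)‖ * ‖e‖ := real_inner_le_norm _ _
    nlinarith [mul_le_mul_of_nonneg_right h5 (norm_nonneg e)]
  have hA : f x - f xstar + μ / 2 * ‖x - xstar‖ ^ 2 ≤ ⟪x - xstar, gf x⟫_ℝ := by
    have h := hsc x xstar
    rw [show xstar - x = -(x - xstar) by abel, inner_neg_right, norm_neg,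
      real_inner_comm] at h
    linarith
  have hnorm2 : ‖a‖ ^ 2 ≤ 2 * ‖x - xstar‖ ^ 2 + 2 * ‖e‖ ^ 2 := by
    have h : ‖a‖ ≤ ‖x - xstar‖ + ‖e‖ := by
      rw [ha, show x - e - xstar = (x - xstar) - e by abel]
      exact norm_sub_le _ _
    nlinarith [norm_nonneg a, sq_nonneg (‖x - xstar‖ - ‖e‖)]
  have hden : (0:ℝ) < 4 * Lf + 8 * L / n := by positivity
  have hη' : η * (4 * Lf + 8 * L / n) ≤ 1 := by
    have h := mul_le_mul_of_nonneg_right hη hden.le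
    rwa [one_div, inv_mul_cancel₀ hden.ne'] at h
  have hsplit : ⟪a, gf x⟫_ℝ = ⟪x - xstar, gf x⟫_ℝ - ⟪e, gf x⟫_ℝ := by
    rw [ha, show x - e - xstar = (x - xstar) - e by abel, inner_sub_left]
  -- put it together
  rw [hI, hsplit]
  have h1 : 2 * η * (f x - f xstar + μ / 2 * ‖x - xstar‖ ^ 2)
      ≤ 2 * η * ⟪x - xstar, gf x⟫_ℝ := mul_le_mul_of_nonneg_left hA (by positivity)
  have h2 : η * (2 * ⟪e, gf x⟫_ℝ) ≤ η * (2 * Lf * ‖e‖ ^ 2 + (f x - f xstar)) :=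
    mul_le_mul_of_nonneg_left hE2 hη0.le
  have h3 : η ^ 2 * (∫ ω, ‖G ω‖ ^ 2 ∂μmeas)
      ≤ η ^ 2 * ((2 * Lf + 4 * L / n) * (f x - f xstar) + (4 * L / n) * (f w - f xstar)) :=
    mul_le_mul_of_nonneg_left hsec (sq_nonneg η)
  have h4 : η ^ 2 * ((2 * Lf + 4 * L / n) * (f x - f xstar)) ≤ η / 2 * (f x - f xstar) := by
    have H : 0 ≤ (η * (f x - f xstar)) * (1 - η * (4 * Lf + 8 * L / n)) :=
      mul_nonneg (mul_nonneg hη0.le hD) (sub_nonneg.mpr hη')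
    have H2 : (η * (f x - f xstar)) * (1 - η * (4 * Lf + 8 * L / n))
        = η * (f x - f xstar) - 4 * (η ^ 2 * Lf * (f x - f xstar))
          - 8 * (η ^ 2 * (L / n) * (f x - f xstar)) := by ring
    have H3 : η ^ 2 * ((2 * Lf + 4 * L / n) * (f x - f xstar))
        = 2 * (η ^ 2 * Lf * (f x - f xstar))
          + 4 * (η ^ 2 * (L / n) * (f x - f xstar)) := by ring
    linarith [H, H2, H3]
  have h5 : μ * η / 2 * ‖a‖ ^ 2 ≤ μ * η / 2 * (2 * ‖x - xstar‖ ^ 2 + 2 * ‖e‖ ^ 2) :=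
    mul_le_mul_of_nonneg_left hnorm2 (by positivity)
  have h6 : η * (μ * ‖e‖ ^ 2) ≤ η * (Lf * ‖e‖ ^ 2) := mul_le_mul_of_nonneg_left hMu hη0.le
  linarith [h1, h2, h3, h4, h5, h6]
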